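/- There exist c > 0 and K ∈ ℕ (depending on β, m, δ) such that the following holds. Let τ₁, τ₂, τ₃ ∈ ℝ and k₁, k₂, k₃ ∈ ℤ \ {0} satisfy τ₁ + τ₂ + τ₃ = 0, k₁ + k₂ + k₃ = 0 and max{|k₁|, |k₂|, |k₃|} ≥ K. Set M_j := ⟨(τ_j - λ_{k_j})/⟨k_j⟩^δ⟩, N_max := max_j ⟨k_j⟩, N_min := min_j ⟨k_j⟩. Suppose the maximum of (M₁, M₂, M₃) is attained at an index j₀ at which the minimum of (⟨k₁⟩, ⟨k₂⟩, ⟨k₃⟩) is also attained, and that M_j > M_{j₀}·(N_min/N_max)^δ for some index j ≠ j₀. Then max_{j ≠ j₀} M_j ≥ c · N_max^{2m-δ} · N_min. -/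

import Mathlib

/-- The Japanese bracket `⟨x⟩ = (1 + |x|²)^{1/2}`. -/
noncomputable def jbr (x : ℝ) : ℝ := Real.sqrt (1 + x ^ 2)

/-- The modulation weight `M = ⟨(τ - λ_k)/⟨k⟩^δ⟩`. -/
noncomputable def modw (lam : ℤ → ℝ) (δ : ℝ) (k : ℤ) (τ : ℝ) : ℝ :=
  jbr ((τ - lam k) / jbr (k : ℝ) ^ δ)

lemma jbr_nonneg (x : ℝ) : 0 ≤ jbr x := Real.sqrt_nonneg _

lemma one_le_jbr (x : ℝ) : 1 ≤ jbr x := by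
  rw [show (1:ℝ) = Real.sqrt 1 by simp [jbr]]
  exact Real.sqrt_le_sqrt (by nlinarith)

lemma jbr_pos (x : ℝ) : 0 < jbr x := lt_of_lt_of_le one_pos (one_le_jbr x)

lemma abs_le_jbr (x : ℝ) : |x| ≤ jbr x := by
  rw [← Real.sqrt_sq_eq_abs]
  exact Real.sqrt_le_sqrt (by nlinarith)

lemma jbr_le_two_mul {x t : ℝ} (ht : 1 ≤ t) (h : x ^ 2 ≤ t ^ 2) : jbr x ≤ 2 * t := by
  rw [show 2 * t = Real.sqrt ((2*t)^2) by rw [Real.sqrt_sq (by linarith)]]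
  exact Real.sqrt_le_sqrt (by nlinarith)

lemma bern_low {x y p : ℝ} (hx : 0 ≤ x) (hy : 0 < y) (hp : 1 ≤ p) :
    y ^ p + p * y ^ (p - 1) * x ≤ (x + y) ^ p := by
  have h0 : 0 ≤ x / y := by positivity
  have hs : (-1 : ℝ) ≤ x / y := by linarith
  have h := one_add_mul_self_le_rpow_one_add hs hp
  have hxy : (1 + x / y) = (x + y) / y := by field_simp; ring
  rw [hxy, Real.div_rpow (by linarith) hy.le] at h
  have hyp : 0 < y ^ p := Real.rpow_pos_of_pos hy p
  have h3 := mul_le_mul_of_nonneg_right h hyp.le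
  rw [div_mul_cancel₀ _ (ne_of_gt hyp)] at h3
  have h4 : y ^ (p - 1) = y ^ p / y := by rw [Real.rpow_sub hy, Real.rpow_one]
  rw [h4]
  calc y ^ p + p * (y ^ p / y) * x = (1 + p * (x / y)) * y ^ p := by field_simp
    _ ≤ (x + y) ^ p := h3

lemma bern_high {x y p : ℝ} (hx : 0 ≤ x) (hy : 0 < y) (hp : 1 ≤ p) :
    (x + y) ^ p ≤ y ^ p + p * (x + y) ^ (p - 1) * x := by
  have hz : 0 < x + y := by linarith
  have hs : (-1:ℝ) ≤ y / (x + y) - 1 := by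
    have : 0 ≤ y / (x + y) := by positivity
    linarith
  have h := one_add_mul_self_le_rpow_one_add hs hp
  rw [show (1 + (y / (x + y) - 1)) = y / (x+y) by ring,
    Real.div_rpow hy.le hz.le] at h
  have hzp : 0 < (x+y) ^ p := Real.rpow_pos_of_pos hz p
  have h3 := mul_le_mul_of_nonneg_right h hzp.le
  rw [div_mul_cancel₀ _ (ne_of_gt hzp)] at h3
  have h4 : (x+y) ^ (p-1) = (x+y) ^ p / (x+y) := by rw [Real.rpow_sub hz, Real.rpow_one]
  have h5 : (1 + p * (y/(x+y) - 1)) * (x+y) ^ p = (x+y) ^ p - p * ((x+y) ^ p / (x+y)) * x := by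
    field_simp; ring
  rw [h5] at h3
  rw [h4]; linarith

lemma res_core (α β m r : ℝ) (hα : 0 < α) (hβ : 0 < β) (hr : 0 < r) (hrm : r < m) :
    ∃ K : ℕ, 0 < K ∧ ∀ x y : ℝ, 1 ≤ x → x ≤ y → (K : ℝ) ≤ x + y →
      β * m / 2 ^ (2*m) * x * (x+y) ^ (2*m) ≤
        β * ((x+y) ^ (2*m+1) - x ^ (2*m+1) - y ^ (2*m+1))
          - α * ((x+y) ^ (2*r+1) - x ^ (2*r+1) - y ^ (2*r+1)) := by
  have hm : 0 < m := hr.trans hrm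
  have h2m : (0:ℝ) < 2 ^ (2*m) := by positivity
  set D : ℝ := max 1 (α * (2*r+1) * 2 ^ (2*m) / (β * m)) with hD
  have hD1 : (1:ℝ) ≤ D := le_max_left _ _
  have hD0 : (0:ℝ) ≤ D := by linarith
  set E : ℝ := 2 * (m - r) with hE
  have hE0 : 0 < E := by simp [hE]; linarith
  refine ⟨⌈D ^ (1/E)⌉₊ + 1, Nat.succ_pos _, ?_⟩
  intro x y hx1 hxy hK
  have hx0 : (0:ℝ) < x := by linarith
  have hy0 : (0:ℝ) < y := by linarith
  have hN0 : (0:ℝ) < x + y := by linarith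
  -- N^E ≥ D
  have hNK : D ^ (1/E) ≤ x + y := by
    calc D ^ (1/E) ≤ (⌈D ^ (1/E)⌉₊ : ℝ) := Nat.le_ceil _
      _ ≤ ((⌈D ^ (1/E)⌉₊ + 1 : ℕ) : ℝ) := by push_cast; linarith
      _ ≤ x + y := hK
  have hDE : D ≤ (x+y) ^ E := by
    calc D = (D ^ (1/E)) ^ E := by
          rw [← Real.rpow_mul hD0, one_div_mul_cancel hE0.ne', Real.rpow_one]
      _ ≤ (x+y) ^ E := Real.rpow_le_rpow (Real.rpow_nonneg hD0 _) hNK hE0.le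
  -- key: α q N^{2r} ≤ β m / 2^{2m} * N^{2m}
  have hq1 : (1:ℝ) ≤ 2*r+1 := by linarith
  have hp1 : (1:ℝ) ≤ 2*m+1 := by linarith
  have hNsplit : (x+y) ^ (2*m) = (x+y) ^ (2*r) * (x+y) ^ E := by
    rw [← Real.rpow_add hN0]; congr 1; rw [hE]; ring
  have hkey : α * (2*r+1) * (x+y) ^ (2*r) ≤ β * m / 2 ^ (2*m) * (x+y) ^ (2*m) := by
    have h1 : α * (2*r+1) * 2 ^ (2*m) / (β * m) ≤ (x+y) ^ E := le_trans (le_max_right _ _) hDE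
    have h2 : α * (2*r+1) ≤ β * m / 2 ^ (2*m) * (x+y) ^ E := by
      rw [div_le_iff₀ (by positivity)] at h1
      rw [div_mul_eq_mul_div, le_div_iff₀ h2m]
      linarith
    have h3 : 0 ≤ (x+y) ^ (2*r) := Real.rpow_nonneg hN0.le _
    calc α * (2*r+1) * (x+y) ^ (2*r) ≤ (β * m / 2 ^ (2*m) * (x+y) ^ E) * (x+y) ^ (2*r) :=
          mul_le_mul_of_nonneg_right h2 h3
      _ = β * m / 2 ^ (2*m) * (x+y) ^ (2*m) := by rw [hNsplit]; ring
  -- lower bound on U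
  have hbl := bern_low hx0.le hy0 hp1
  have hpm1 : (2*m+1) - 1 = 2*m := by ring
  rw [hpm1] at hbl
  have hxp : x ^ (2*m+1) ≤ x * y ^ (2*m) := by
    have : x ^ (2*m+1) = x * x ^ (2*m) := by
      rw [show (2*m+1) = 1 + 2*m by ring, Real.rpow_add hx0, Real.rpow_one]
    rw [this]
    exact mul_le_mul_of_nonneg_left (Real.rpow_le_rpow hx0.le hxy (by linarith)) hx0.le
  have hyN : ((x+y)/2) ^ (2*m) ≤ y ^ (2*m) :=
    Real.rpow_le_rpow (by linarith) (by linarith) (by linarith)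
  have hyN' : (x+y) ^ (2*m) / 2 ^ (2*m) ≤ y ^ (2*m) := by
    rwa [Real.div_rpow hN0.le (by norm_num)] at hyN
  have hU : 2 * m * (x * ((x+y) ^ (2*m) / 2 ^ (2*m))) ≤
      (x+y) ^ (2*m+1) - x ^ (2*m+1) - y ^ (2*m+1) := by
    have h5 : 2 * m * (x * ((x+y) ^ (2*m) / 2 ^ (2*m))) ≤ 2 * m * (x * y ^ (2*m)) :=
      mul_le_mul_of_nonneg_left
        (mul_le_mul_of_nonneg_left hyN' hx0.le) (by linarith : (0:ℝ) ≤ 2 * m)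
    have h6 : 2 * m * (x * y ^ (2*m)) ≤ (x+y) ^ (2*m+1) - x ^ (2*m+1) - y ^ (2*m+1) := by
      linarith [hbl, hxp]
    linarith
  -- bounds on V
  have hbh := bern_high hx0.le hy0 hq1
  have hq2 : (2*r+1) - 1 = 2*r := by ring
  rw [hq2] at hbh
  have hxq : 0 ≤ x ^ (2*r+1) := Real.rpow_nonneg hx0.le _
  have hVhigh : (x+y) ^ (2*r+1) - x ^ (2*r+1) - y ^ (2*r+1) ≤ (2*r+1) * (x+y) ^ (2*r) * x := by
    linarith
  have hblq := bern_low hx0.le hy0 hq1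
  rw [hq2] at hblq
  have hxq2 : x ^ (2*r+1) ≤ (2*r+1) * y ^ (2*r) * x := by
    have h7 : x ^ (2*r+1) = x * x ^ (2*r) := by
      rw [show (2*r+1) = 1 + 2*r by ring, Real.rpow_add hx0, Real.rpow_one]
    have h8 : x * x ^ (2*r) ≤ x * y ^ (2*r) :=
      mul_le_mul_of_nonneg_left (Real.rpow_le_rpow hx0.le hxy (by linarith)) hx0.le
    have h9 : (0:ℝ) ≤ 2*r * (y ^ (2*r) * x) := by positivity
    rw [h7]; linarith
  have hVlow : 0 ≤ (x+y) ^ (2*r+1) - x ^ (2*r+1) - y ^ (2*r+1) := by linarith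
  -- assemble
  have hkeyx : α * ((2*r+1) * (x+y) ^ (2*r) * x) ≤ β * m / 2 ^ (2*m) * (x+y) ^ (2*m) * x := by
    have := mul_le_mul_of_nonneg_right hkey hx0.le
    linarith
  have hU2 := mul_le_mul_of_nonneg_left hU hβ.le
  have hV2 := mul_le_mul_of_nonneg_left hVhigh hα.le
  ring_nf at hU2 hV2 hkeyx ⊢; linarith [hU2, hV2, hkeyx]

lemma lam_sum_pos (α β μ m r : ℝ) (lam : ℤ → ℝ)
    (hlam : ∀ k : ℤ, lam k =
      -β * (k : ℝ) * |(k : ℝ)| ^ (2 * m) + α * (k : ℝ) * |(k : ℝ)| ^ (2 * r) - 2 * μ * (k : ℝ))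
    {a b : ℤ} (ha : 0 < a) (hb : 0 < b) :
    lam a + lam b + lam (-(a+b)) =
      β * (((a:ℝ)+(b:ℝ)) ^ (2*m+1) - (a:ℝ) ^ (2*m+1) - (b:ℝ) ^ (2*m+1))
    - α * (((a:ℝ)+(b:ℝ)) ^ (2*r+1) - (a:ℝ) ^ (2*r+1) - (b:ℝ) ^ (2*r+1)) := by
  have hA : (0:ℝ) < (a:ℝ) := by exact_mod_cast ha
  have hB : (0:ℝ) < (b:ℝ) := by exact_mod_cast hb
  have hAB : (0:ℝ) < (a:ℝ) + (b:ℝ) := by linarith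
  have e : ∀ x : ℝ, 0 < x → ∀ s : ℝ, x ^ (s + 1) = x * x ^ s := by
    intro x hx s; rw [Real.rpow_add hx, Real.rpow_one]; ring
  rw [hlam, hlam, hlam]
  push_cast
  rw [abs_neg, abs_of_pos hA, abs_of_pos hB, abs_of_pos hAB,
    e _ hA (2*m), e _ hB (2*m), e _ hAB (2*m), e _ hA (2*r), e _ hB (2*r), e _ hAB (2*r)]
  ring

lemma lam_odd (α β μ m r : ℝ) (lam : ℤ → ℝ)
    (hlam : ∀ k : ℤ, lam k =
      -β * (k : ℝ) * |(k : ℝ)| ^ (2 * m) + α * (k : ℝ) * |(k : ℝ)| ^ (2 * r) - 2 * μ * (k : ℝ))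
    (k : ℤ) : lam (-k) = - lam k := by
  rw [hlam, hlam]; push_cast; rw [abs_neg]; ring

lemma res (α β μ m r : ℝ) (hα : 0 < α) (hβ : 0 < β) (hr : 0 < r) (hrm : r < m)
    (lam : ℤ → ℝ)
    (hlam : ∀ k : ℤ, lam k =
      -β * (k : ℝ) * |(k : ℝ)| ^ (2 * m) + α * (k : ℝ) * |(k : ℝ)| ^ (2 * r) - 2 * μ * (k : ℝ)) :
    ∃ K : ℕ, 0 < K ∧ ∀ a b c : ℤ, a ≠ 0 → b ≠ 0 → c ≠ 0 → a + b + c = 0 →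
      (K : ℤ) ≤ max |a| (max |b| |c|) →
      β * m / 2 ^ (2*m) * ((min |a| (min |b| |c|) : ℤ) : ℝ) *
          ((max |a| (max |b| |c|) : ℤ) : ℝ) ^ (2*m)
        ≤ |lam a + lam b + lam c| := by
  obtain ⟨K, hK0, hcore⟩ := res_core α β m r hα hβ hr hrm
  refine ⟨K, hK0, ?_⟩
  -- positive-pair claim
  have claim : ∀ u v : ℤ, 0 < u → 0 < v → (K:ℤ) ≤ u + v →
      β * m / 2 ^ (2*m) * ((min u v : ℤ) : ℝ) * (((u+v : ℤ)) : ℝ) ^ (2*m)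
        ≤ lam u + lam v + lam (-(u+v)) := by
    have base : ∀ u v : ℤ, 0 < u → 0 < v → u ≤ v → (K:ℤ) ≤ u + v →
        β * m / 2 ^ (2*m) * ((u : ℤ) : ℝ) * (((u+v : ℤ)) : ℝ) ^ (2*m)
          ≤ lam u + lam v + lam (-(u+v)) := by
      intro u v hu hv huv hK
      rw [lam_sum_pos α β μ m r lam hlam hu hv]
      have h1 : (1:ℝ) ≤ (u:ℝ) := by exact_mod_cast hu
      have h2 : (u:ℝ) ≤ (v:ℝ) := by exact_mod_cast huv
      have h3 : (K:ℝ) ≤ (u:ℝ) + (v:ℝ) := by exact_mod_cast hK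
      have := hcore (u:ℝ) (v:ℝ) h1 h2 h3
      push_cast
      convert this using 2 <;> push_cast <;> ring
    intro u v hu hv hK
    rcases le_total u v with h | h
    · have hmin : ((min u v : ℤ) : ℝ) = ((u : ℤ) : ℝ) := by congr 1; omega
      rw [hmin]
      exact base u v hu hv h hK
    · have hmin : ((min u v : ℤ) : ℝ) = ((v : ℤ) : ℝ) := by congr 1; omega
      have hadd : ((u + v : ℤ) : ℝ) = ((v + u : ℤ) : ℝ) := by congr 1; omega
      have hadd2 : -(u + v) = -(v + u) := by omega
      rw [hmin, hadd, hadd2]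
      calc β * m / 2 ^ (2*m) * ((v:ℤ):ℝ) * (((v+u : ℤ)):ℝ) ^ (2*m)
          ≤ lam v + lam u + lam (-(v+u)) := base v u hv hu h (by omega)
        _ = lam u + lam v + lam (-(v+u)) := by ring
  -- claim2 : both ≤ |w|
  have claim2 : ∀ u v w : ℤ, u ≠ 0 → v ≠ 0 → w ≠ 0 → u + v + w = 0 →
      |u| ≤ |w| → |v| ≤ |w| →
      ∀ n N : ℤ, n = min |u| |v| → N = |w| → (K:ℤ) ≤ N →
      β * m / 2 ^ (2*m) * (n : ℝ) * (N : ℝ) ^ (2*m) ≤ |lam u + lam v + lam w| := by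
    intro u v w hu hv hw hsum h1 h2 n N hn hN hK
    simp only [Int.abs_eq_natAbs] at h1 h2 hn hN
    rcases lt_trichotomy u 0 with hu0 | hu0 | hu0
    · rcases lt_trichotomy v 0 with hv0 | hv0 | hv0
      · -- both negative
        have h := claim (-u) (-v) (by omega) (by omega) (by omega)
        have hw'' : -(-u + -v) = -w := by omega
        rw [hw''] at h
        have hmin : ((min (-u) (-v) : ℤ) : ℝ) = (n : ℝ) := by congr 1; omega
        have hNN : (((-u) + (-v) : ℤ) : ℝ) = (N : ℝ) := by congr 1; omega
        rw [hmin, hNN] at h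
        have e1 := lam_odd α β μ m r lam hlam u
        have e2 := lam_odd α β μ m r lam hlam v
        have e3 := lam_odd α β μ m r lam hlam w
        have heq : lam (-u) + lam (-v) + lam (-w) = -(lam u + lam v + lam w) := by
          rw [e1, e2, e3]; ring
        rw [heq] at h
        exact le_trans h (neg_le_abs _)
      · omega
      · exfalso; omega
    · omega
    · rcases lt_trichotomy v 0 with hv0 | hv0 | hv0
      · exfalso; omega
      · omega
      · -- both positive
        have h := claim u v hu0 hv0 (by omega)
        have hw' : -(u + v) = w := by omega
        rw [hw'] at h
        have hmin : ((min u v : ℤ) : ℝ) = (n : ℝ) := by congr 1; omega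
        have hNN : ((u + v : ℤ) : ℝ) = (N : ℝ) := by congr 1; omega
        rw [hmin, hNN] at h
        exact le_trans h (le_abs_self _)
  -- case analysis on the max
  intro a b c ha hb hc hsum hK
  have habs : ∀ z : ℤ, |z| = (z.natAbs : ℤ) := fun z => Int.abs_eq_natAbs z
  rcases le_total |a| |b| with h1 | h1
  · rcases le_total |b| |c| with h2 | h2
    · exact claim2 a b c ha hb hc hsum (by simp only [habs] at *; omega)
        (by simp only [habs] at *; omega) _ _
        (by simp only [habs] at *; omega)
        (by simp only [habs] at *; omega)
        (by simp only [habs] at h1 h2 hK ⊢; omega)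
    · rw [show lam a + lam b + lam c = lam a + lam c + lam b by ring]
      exact claim2 a c b ha hc hb (by omega) (by simp only [habs] at *; omega)
        (by simp only [habs] at *; omega) _ _
        (by simp only [habs] at *; omega)
        (by simp only [habs] at *; omega)
        (by simp only [habs] at h1 h2 hK ⊢; omega)
  · rcases le_total |a| |c| with h3 | h3
    · exact claim2 a b c ha hb hc hsum (by simp only [habs] at *; omega)
        (by simp only [habs] at *; omega) _ _
        (by simp only [habs] at *; omega)
        (by simp only [habs] at *; omega)
        (by simp only [habs] at h1 h3 hK ⊢; omega)
    · rw [show lam a + lam b + lam c = lam b + lam c + lam a by ring]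
      exact claim2 b c a hb hc ha (by omega) (by simp only [habs] at *; omega)
        (by simp only [habs] at *; omega) _ _
        (by simp only [habs] at *; omega)
        (by simp only [habs] at *; omega)
        (by simp only [habs] at h1 h3 hK ⊢; omega)

/-- if the maximal modulation is attained at the index `j₀` of the minimal
frequency, but some other modulation exceeds `M_{j₀} (N_min/N_max)^δ`, then
`max_{j ≠ j₀} M_j ≥ c N_max^{2m-δ} N_min`. -/
theorem modulation_max_at_min_frequency_case2
    (α β μ m r δ : ℝ) (hα : 0 < α) (hβ : 0 < β) (hr : 0 < r) (hrm : r < m) (hδ : 0 < δ)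
    (lam : ℤ → ℝ)
    (hlam : ∀ k : ℤ, lam k =
      -β * (k : ℝ) * |(k : ℝ)| ^ (2 * m) + α * (k : ℝ) * |(k : ℝ)| ^ (2 * r) - 2 * μ * (k : ℝ)) :
    ∃ c > 0, ∃ K : ℕ, ∀ (k : Fin 3 → ℤ) (τ : Fin 3 → ℝ),
      (∀ j, k j ≠ 0) → (∑ j, τ j) = 0 → (∑ j, k j) = 0 →
      (K : ℤ) ≤ max |k 0| (max |k 1| |k 2|) →
      ∀ j₀ : Fin 3,
        (∀ j, modw lam δ (k j) (τ j) ≤ modw lam δ (k j₀) (τ j₀)) →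
        (∀ j, jbr ((k j₀ : ℤ) : ℝ) ≤ jbr ((k j : ℤ) : ℝ)) →
        (∃ j, j ≠ j₀ ∧ modw lam δ (k j) (τ j) >
          modw lam δ (k j₀) (τ j₀) *
            (min (jbr ((k 0 : ℤ) : ℝ)) (min (jbr ((k 1 : ℤ) : ℝ)) (jbr ((k 2 : ℤ) : ℝ))) /
              max (jbr ((k 0 : ℤ) : ℝ)) (max (jbr ((k 1 : ℤ) : ℝ)) (jbr ((k 2 : ℤ) : ℝ)))) ^ δ) →
        ∃ j, j ≠ j₀ ∧
          c * max (jbr ((k 0 : ℤ) : ℝ))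
                (max (jbr ((k 1 : ℤ) : ℝ)) (jbr ((k 2 : ℤ) : ℝ))) ^ (2 * m - δ)
              * min (jbr ((k 0 : ℤ) : ℝ)) (min (jbr ((k 1 : ℤ) : ℝ)) (jbr ((k 2 : ℤ) : ℝ)))
            ≤ modw lam δ (k j) (τ j) := by
  obtain ⟨K, hK0, hres⟩ := res α β μ m r hα hβ hr hrm lam hlam
  have hm : 0 < m := hr.trans hrm
  have h2m : (0:ℝ) < 2 ^ (2*m) := by positivity
  have h2m1 : (0:ℝ) < 2 ^ (2*m+1) := by positivity
  refine ⟨β * m / 2 ^ (2*m) / (2 ^ (2*m+1) * 3), by positivity, K, ?_⟩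
  intro k τ hk hτs hks hKm j₀ hmax hbr hex
  obtain ⟨j₁, hne1, hgt⟩ := hex
  have hthird : ∀ p q : Fin 3, p ≠ q → ∃ s, s ≠ q ∧ ∀ j : Fin 3, j = q ∨ j = p ∨ j = s := by
    decide
  obtain ⟨j₂, hne2, hcov⟩ := hthird j₁ j₀ hne1
  -- notation
  set Bmx := max (jbr ((k 0 : ℤ) : ℝ)) (max (jbr ((k 1 : ℤ) : ℝ)) (jbr ((k 2 : ℤ) : ℝ))) with hBmx
  set Bmn := min (jbr ((k 0 : ℤ) : ℝ)) (min (jbr ((k 1 : ℤ) : ℝ)) (jbr ((k 2 : ℤ) : ℝ))) with hBmn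
  have hBmxpos : 0 < Bmx := lt_of_lt_of_le (jbr_pos _) (le_max_left _ _)
  have hBmnpos : 0 < Bmn := lt_min (jbr_pos _) (lt_min (jbr_pos _) (jbr_pos _))
  have hBmxδ : 0 < Bmx ^ δ := Real.rpow_pos_of_pos hBmxpos δ
  have hBi : ∀ i : Fin 3, jbr ((k i : ℤ) : ℝ) ≤ Bmx := by
    intro i
    fin_cases i
    · exact le_max_left _ _
    · exact le_trans (le_max_left _ _) (le_max_right _ _)
    · exact le_trans (le_max_right _ _) (le_max_right _ _)
  have hB0 : jbr ((k j₀ : ℤ) : ℝ) ≤ Bmn := le_min (hbr 0) (le_min (hbr 1) (hbr 2))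
  -- per-index: |τ i - lam (k i)| ≤ modw * B i ^ δ
  have habs : ∀ i : Fin 3, |τ i - lam (k i)| ≤ modw lam δ (k i) (τ i) * jbr ((k i : ℤ) : ℝ) ^ δ := by
    intro i
    have hb : 0 < jbr ((k i : ℤ) : ℝ) ^ δ := Real.rpow_pos_of_pos (jbr_pos _) δ
    have h1 : |(τ i - lam (k i)) / jbr ((k i : ℤ) : ℝ) ^ δ| ≤ modw lam δ (k i) (τ i) :=
      abs_le_jbr _
    calc |τ i - lam (k i)|
        = |(τ i - lam (k i)) / jbr ((k i : ℤ) : ℝ) ^ δ| * jbr ((k i : ℤ) : ℝ) ^ δ := by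
          rw [abs_div, abs_of_pos hb, div_mul_cancel₀ _ (ne_of_gt hb)]
      _ ≤ modw lam δ (k i) (τ i) * jbr ((k i : ℤ) : ℝ) ^ δ :=
          mul_le_mul_of_nonneg_right h1 hb.le
  -- key reduction to a chosen index
  have key : ∀ js : Fin 3, js ≠ j₀ →
      modw lam δ (k j₁) (τ j₁) ≤ modw lam δ (k js) (τ js) →
      modw lam δ (k j₂) (τ j₂) ≤ modw lam δ (k js) (τ js) →
      β * m / 2 ^ (2*m) / (2 ^ (2*m+1) * 3) * Bmx ^ (2 * m - δ) * Bmn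
        ≤ modw lam δ (k js) (τ js) := by
    intro js hjs hle1 hle2
    have hMs0 : 0 ≤ modw lam δ (k js) (τ js) := jbr_nonneg _
    -- step C
    have hC : modw lam δ (k j₀) (τ j₀) * Bmn ^ δ ≤ modw lam δ (k j₁) (τ j₁) * Bmx ^ δ := by
      have h2 := mul_le_mul_of_nonneg_right hgt.le (Real.rpow_nonneg hBmxpos.le δ)
      have h3 : (Bmn / Bmx) ^ δ * Bmx ^ δ = Bmn ^ δ := by
        rw [Real.div_rpow hBmnpos.le hBmxpos.le, div_mul_cancel₀ _ (ne_of_gt hBmxδ)]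
      calc modw lam δ (k j₀) (τ j₀) * Bmn ^ δ
          = modw lam δ (k j₀) (τ j₀) * (Bmn / Bmx) ^ δ * Bmx ^ δ := by rw [mul_assoc, h3]
        _ ≤ modw lam δ (k j₁) (τ j₁) * Bmx ^ δ := h2
    -- all indices bounded
    have hall : ∀ i : Fin 3, |τ i - lam (k i)| ≤ modw lam δ (k js) (τ js) * Bmx ^ δ := by
      intro i
      rcases hcov i with h | h | h
      · rw [h]
        calc |τ j₀ - lam (k j₀)| ≤ modw lam δ (k j₀) (τ j₀) * jbr ((k j₀ : ℤ) : ℝ) ^ δ := habs j₀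
          _ ≤ modw lam δ (k j₀) (τ j₀) * Bmn ^ δ :=
              mul_le_mul_of_nonneg_left
                (Real.rpow_le_rpow (jbr_nonneg _) hB0 hδ.le) (jbr_nonneg _)
          _ ≤ modw lam δ (k j₁) (τ j₁) * Bmx ^ δ := hC
          _ ≤ modw lam δ (k js) (τ js) * Bmx ^ δ :=
              mul_le_mul_of_nonneg_right hle1 (Real.rpow_nonneg hBmxpos.le δ)
      · rw [h]
        calc |τ j₁ - lam (k j₁)| ≤ modw lam δ (k j₁) (τ j₁) * jbr ((k j₁ : ℤ) : ℝ) ^ δ := habs j₁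
          _ ≤ modw lam δ (k js) (τ js) * Bmx ^ δ :=
              mul_le_mul hle1 (Real.rpow_le_rpow (jbr_nonneg _) (hBi j₁) hδ.le)
                (Real.rpow_nonneg (jbr_nonneg _) δ) hMs0
      · rw [h]
        calc |τ j₂ - lam (k j₂)| ≤ modw lam δ (k j₂) (τ j₂) * jbr ((k j₂ : ℤ) : ℝ) ^ δ := habs j₂
          _ ≤ modw lam δ (k js) (τ js) * Bmx ^ δ :=
              mul_le_mul hle2 (Real.rpow_le_rpow (jbr_nonneg _) (hBi j₂) hδ.le)
                (Real.rpow_nonneg (jbr_nonneg _) δ) hMs0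
    -- sum bound
    rw [Fin.sum_univ_three] at hτs hks
    have hsum : |lam (k 0) + lam (k 1) + lam (k 2)| ≤ 3 * (modw lam δ (k js) (τ js) * Bmx ^ δ) := by
      have e : lam (k 0) + lam (k 1) + lam (k 2)
          = -((τ 0 - lam (k 0)) + (τ 1 - lam (k 1)) + (τ 2 - lam (k 2))) := by
        rw [show (τ 0 - lam (k 0)) + (τ 1 - lam (k 1)) + (τ 2 - lam (k 2))
            = (τ 0 + τ 1 + τ 2) - (lam (k 0) + lam (k 1) + lam (k 2)) by ring, hτs]
        ring
      rw [e, abs_neg]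
      calc |(τ 0 - lam (k 0)) + (τ 1 - lam (k 1)) + (τ 2 - lam (k 2))|
          ≤ |(τ 0 - lam (k 0)) + (τ 1 - lam (k 1))| + |τ 2 - lam (k 2)| := abs_add_le _ _
        _ ≤ |τ 0 - lam (k 0)| + |τ 1 - lam (k 1)| + |τ 2 - lam (k 2)| := by
            linarith [abs_add_le (τ 0 - lam (k 0)) (τ 1 - lam (k 1))]
        _ ≤ 3 * (modw lam δ (k js) (τ js) * Bmx ^ δ) := by
            linarith [hall 0, hall 1, hall 2]
    -- resonance bound
    have hres' := hres (k 0) (k 1) (k 2) (hk 0) (hk 1) (hk 2) hks hKm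
    -- integer min/max vs brackets
    set n : ℤ := min |k 0| (min |k 1| |k 2|) with hn
    set N : ℤ := max |k 0| (max |k 1| |k 2|) with hN
    have hn1 : (1:ℤ) ≤ n := by
      have h0 := hk 0; have h1 := hk 1; have h2 := hk 2
      simp only [hn, Int.abs_eq_natAbs]; omega
    have hN1 : (1:ℤ) ≤ N := by
      have h0 := hk 0
      simp only [hN, Int.abs_eq_natAbs]; omega
    have hn1R : (1:ℝ) ≤ (n:ℝ) := by exact_mod_cast hn1
    have hN1R : (1:ℝ) ≤ (N:ℝ) := by exact_mod_cast hN1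
    have hBmn2n : Bmn ≤ 2 * (n:ℝ) := by
      have hcases : n = |k 0| ∨ n = |k 1| ∨ n = |k 2| := by
        simp only [hn, Int.abs_eq_natAbs]; omega
      have hjle : ∀ i : Fin 3, n = |k i| → Bmn ≤ 2 * (n:ℝ) := by
        intro i hi
        have hsq : ((k i : ℤ) : ℝ) ^ 2 = ((n:ℤ):ℝ) ^ 2 := by
          rw [hi]; push_cast [sq_abs]; ring
        have h2 : jbr ((k i : ℤ) : ℝ) ≤ 2 * (n:ℝ) := jbr_le_two_mul hn1R (le_of_eq hsq)
        refine le_trans ?_ h2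
        fin_cases i
        · exact min_le_left _ _
        · exact le_trans (min_le_right _ _) (min_le_left _ _)
        · exact le_trans (min_le_right _ _) (min_le_right _ _)
      rcases hcases with h | h | h
      exacts [hjle 0 h, hjle 1 h, hjle 2 h]
    have hBmx2N : Bmx ≤ 2 * (N:ℝ) := by
      have hile : ∀ i : Fin 3, jbr ((k i : ℤ) : ℝ) ≤ 2 * (N:ℝ) := by
        intro i
        have habsle : |k i| ≤ N := by
          fin_cases i
          · exact le_max_left _ _
          · exact le_trans (le_max_left _ _) (le_max_right _ _)
          · exact le_trans (le_max_right _ _) (le_max_right _ _)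
        have hsq : ((k i : ℤ) : ℝ) ^ 2 ≤ ((N:ℤ):ℝ) ^ 2 := by
          have h1 : (|k i| : ℝ) ≤ ((N:ℤ):ℝ) := by exact_mod_cast habsle
          have h2 : (0:ℝ) ≤ (|k i| : ℝ) := by positivity
          nlinarith [sq_abs ((k i : ℤ) : ℝ), (by push_cast; ring : (|k i| : ℝ) ^ 2 = |((k i : ℤ) : ℝ)| ^ 2)]
        exact jbr_le_two_mul hN1R hsq
      exact max_le (hile 0) (max_le (hile 1) (hile 2))
    -- final chain
    have hsplit : Bmx ^ (2 * m - δ) = Bmx ^ (2*m) / Bmx ^ δ := Real.rpow_sub hBmxpos _ _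
    rw [hsplit, show β * m / 2 ^ (2*m) / (2 ^ (2*m+1) * 3) * (Bmx ^ (2*m) / Bmx ^ δ) * Bmn
        = β * m / 2 ^ (2*m) / (2 ^ (2*m+1) * 3) * Bmx ^ (2*m) * Bmn / Bmx ^ δ by ring,
      div_le_iff₀ hBmxδ]
    have hc0 : (0:ℝ) ≤ β * m / 2 ^ (2*m) / (2 ^ (2*m+1) * 3) := by positivity
    have hBmxP : Bmx ^ (2*m) ≤ 2 ^ (2*m) * (N:ℝ) ^ (2*m) := by
      calc Bmx ^ (2*m) ≤ (2 * (N:ℝ)) ^ (2*m) :=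
            Real.rpow_le_rpow hBmxpos.le hBmx2N (by linarith)
        _ = 2 ^ (2*m) * (N:ℝ) ^ (2*m) := Real.mul_rpow (by norm_num) (by linarith)
    have hNP0 : (0:ℝ) ≤ (N:ℝ) ^ (2*m) := Real.rpow_nonneg (by linarith) _
    have h2pow : (2:ℝ) ^ (2*m+1) = 2 ^ (2*m) * 2 := by
      rw [Real.rpow_add (by norm_num), Real.rpow_one]
    calc β * m / 2 ^ (2*m) / (2 ^ (2*m+1) * 3) * Bmx ^ (2*m) * Bmn
        ≤ β * m / 2 ^ (2*m) / (2 ^ (2*m+1) * 3) * (2 ^ (2*m) * (N:ℝ) ^ (2*m)) * (2 * (n:ℝ)) := by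
          have hBmn0 : 0 ≤ Bmn := hBmnpos.le
          have t1 : β * m / 2 ^ (2*m) / (2 ^ (2*m+1) * 3) * Bmx ^ (2*m)
              ≤ β * m / 2 ^ (2*m) / (2 ^ (2*m+1) * 3) * (2 ^ (2*m) * (N:ℝ) ^ (2*m)) :=
            mul_le_mul_of_nonneg_left hBmxP hc0
          have t2 : (0:ℝ) ≤ β * m / 2 ^ (2*m) / (2 ^ (2*m+1) * 3) * (2 ^ (2*m) * (N:ℝ) ^ (2*m)) := by
            positivity
          exact mul_le_mul t1 hBmn2n hBmn0 t2
      _ = β * m / 2 ^ (2*m) * (n:ℝ) * (N:ℝ) ^ (2*m) / 3 := by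
          rw [h2pow]; field_simp
      _ ≤ |lam (k 0) + lam (k 1) + lam (k 2)| / 3 := by linarith [hres']
      _ ≤ modw lam δ (k js) (τ js) * Bmx ^ δ := by linarith [hsum]
  -- pick the better of j₁, j₂
  rcases le_total (modw lam δ (k j₂) (τ j₂)) (modw lam δ (k j₁) (τ j₁)) with hc | hc
  · exact ⟨j₁, hne1, key j₁ hne1 le_rfl hc⟩
  · exact ⟨j₂, hne2, key j₂ hne2 hc le_rfl⟩
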